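/- Let q be an odd prime power. The set E of matrices in SL₂(𝔽_q) having −1 as an eigenvalue has exactly q² elements. -/

import Mathlib

open Matrix

noncomputable def mkA {F : Type} [Field F] (a b : F) (hb : b ≠ 0) :
    Matrix.SpecialLinearGroup (Fin 2) F :=
  ⟨!![a, b; -((a+1)^2)/b, -2-a], by
    simp [Matrix.det_fin_two]; field_simp; ring⟩

noncomputable def mkB {F : Type} [Field F] (c : F) :
    Matrix.SpecialLinearGroup (Fin 2) F :=
  ⟨!![-1, 0; c, -1], by simp [Matrix.det_fin_two]⟩

open scoped Classical in
noncomputable def eqv (F : Type) [Field F] :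
    {X : Matrix.SpecialLinearGroup (Fin 2) F |
      ((X : Matrix (Fin 2) (Fin 2) F) + 1).det = 0} ≃ (F × Fˣ) ⊕ F where
  toFun X := if h : (X.1 : Matrix (Fin 2) (Fin 2) F) 0 1 = 0 then
      Sum.inr ((X.1 : Matrix (Fin 2) (Fin 2) F) 1 0)
    else Sum.inl ((X.1 : Matrix (Fin 2) (Fin 2) F) 0 0,
      Units.mk0 _ h)
  invFun y := match y with
    | Sum.inl (a, b) => ⟨mkA a b.1 b.ne_zero, by
        change ((mkA a b.1 b.ne_zero : Matrix (Fin 2) (Fin 2) F) + 1).det = 0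
        simp [mkA, Matrix.det_fin_two, Matrix.one_apply, Set.mem_setOf_eq]
        field_simp; ring⟩
    | Sum.inr c => ⟨mkB c, by
        change ((mkB c : Matrix (Fin 2) (Fin 2) F) + 1).det = 0
        simp [mkB, Matrix.det_fin_two, Matrix.one_apply, Set.mem_setOf_eq]⟩
  left_inv := by
    rintro ⟨X, hX⟩
    set a := (X : Matrix (Fin 2) (Fin 2) F) 0 0 with ha
    set b := (X : Matrix (Fin 2) (Fin 2) F) 0 1 with hb
    set c := (X : Matrix (Fin 2) (Fin 2) F) 1 0 with hc
    set d := (X : Matrix (Fin 2) (Fin 2) F) 1 1 with hd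
    have hdet : a * d - b * c = 1 := by
      have := X.2
      rw [Matrix.det_fin_two] at this
      exact this
    have htr : a + d + 2 = 0 := by
      have h1 : ((X : Matrix (Fin 2) (Fin 2) F) + 1).det
          = (a + 1) * (d + 1) - b * c := by
        simp [Matrix.det_fin_two, Matrix.one_apply, ha, hb, hc, hd]
      rw [Set.mem_setOf_eq, h1] at hX
      linear_combination hX - hdet
    have hdval : d = -2 - a := by linear_combination htr
    by_cases hb0 : b = 0
    · simp only [← hb, hb0, dif_pos]
      have ha1 : a = -1 := by
        have h2 : (a + 1)^2 = 0 := by linear_combination (-1)*hdet + a*htr - c*hb0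
        have h3 := pow_eq_zero_iff (n := 2) (by norm_num) |>.mp h2
        linear_combination h3
      apply Subtype.ext; apply Subtype.ext
      ext i j
      fin_cases i <;> fin_cases j <;>
        simp [mkB, ← ha, ← hb, ← hc, ← hd, hb0, ha1, hdval] <;> ring_nf <;>
        simp [ha1]
    · simp only [← hb, hb0, dif_neg, not_false_iff]
      apply Subtype.ext; apply Subtype.ext
      ext i j
      have hcval : c = -((a+1)^2)/b := by
        field_simp
        linear_combination (-1)*hdet + a*htr
      fin_cases i <;> fin_cases j <;>
        simp [mkA, ← ha, ← hb, ← hc, ← hd, hcval, hdval]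
  right_inv := by
    rintro (⟨a, b⟩ | c)
    · simp [mkA, b.ne_zero]
    · simp [mkB]

/-- Over a finite field `F` of odd order `q`, the set of matrices in `SL₂(F)`
having `-1` as an eigenvalue (i.e. `det(X + I) = 0`) has exactly `q²` elements. -/
theorem card_eigenvalue_neg_one {F : Type} [Field F] [Fintype F]
    (hodd : Odd (Fintype.card F)) :
    {X : Matrix.SpecialLinearGroup (Fin 2) F |
      ((X : Matrix (Fin 2) (Fin 2) F) + 1).det = 0}.ncard = Fintype.card F ^ 2 := by
  classical
  rw [← Nat.card_coe_set_eq, Nat.card_congr (eqv F), Nat.card_eq_fintype_card,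
    Fintype.card_sum, Fintype.card_prod, Fintype.card_units]
  obtain ⟨n, hn⟩ : ∃ n, Fintype.card F = n + 1 :=
    ⟨Fintype.card F - 1, (Nat.succ_pred_eq_of_pos Fintype.card_pos).symm⟩
  rw [hn]
  simp [Nat.add_sub_cancel]
  ring
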